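/- For every integer d ≥ 5, the quotient Γ_d/Stab_{Γ_d}(2) of the Fabrykowski–Gupta group by its second level stabilizer is isomorphic to the wreath product ℤ_d ≀ ℤ_d, that is, to the semidirect product (ℤ_d)^d ⋊ ℤ_d in which ℤ_d acts on the direct product (ℤ_d)^d by cyclically permuting the coordinates. -/

import Mathlib

namespace FG

variable (d : ℕ) [NeZero d]

/-- The rooted-tree automorphism `a` of the `d`-regular rooted tree (vertex set: the free
monoid `{0,…,d-1}^*`), acting by `(x w)^a = ((x+1) mod d) w`. -/
def aFun : List (Fin d) → List (Fin d)
  | [] => []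
  | x :: w => (x + 1) :: w

def aInv : List (Fin d) → List (Fin d)
  | [] => []
  | x :: w => (x - 1) :: w

lemma aInv_aFun : ∀ w, aInv d (aFun d w) = w := by
  intro w; cases w <;> simp [aFun, aInv]

lemma aFun_aInv : ∀ w, aFun d (aInv d w) = w := by
  intro w; cases w <;> simp [aFun, aInv]

def aPerm : Equiv.Perm (List (Fin d)) :=
  ⟨aFun d, aInv d, aInv_aFun d, aFun_aInv d⟩

/-- The rooted-tree automorphism `r`:
`(0 w)^r = 0 w^a`, `(x w)^r = x w` for `1 ≤ x ≤ d-2`, `((d-1) w)^r = (d-1) w^r`. -/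
def rFun : List (Fin d) → List (Fin d)
  | [] => []
  | x :: w => if x = 0 then x :: aFun d w else if x = -1 then x :: rFun w else x :: w

def rInv : List (Fin d) → List (Fin d)
  | [] => []
  | x :: w => if x = 0 then x :: aInv d w else if x = -1 then x :: rInv w else x :: w

lemma rInv_rFun : ∀ w, rInv d (rFun d w) = w := by
  intro w
  induction w with
  | nil => simp [rFun, rInv]
  | cons x w ih =>
    by_cases h0 : x = 0
    · simp [rFun, rInv, h0, aInv_aFun]
    · by_cases h1 : x = -1
      · subst h1
        have hd : ¬ d = 1 := by simpa using h0
        simp [rFun, rInv, hd, ih]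
      · simp [rFun, rInv, h0, h1]

lemma rFun_rInv : ∀ w, rFun d (rInv d w) = w := by
  intro w
  induction w with
  | nil => simp [rFun, rInv]
  | cons x w ih =>
    by_cases h0 : x = 0
    · simp [rFun, rInv, h0, aFun_aInv]
    · by_cases h1 : x = -1
      · subst h1
        have hd : ¬ d = 1 := by simpa using h0
        simp [rFun, rInv, hd, ih]
      · simp [rFun, rInv, h0, h1]

def rPerm : Equiv.Perm (List (Fin d)) :=
  ⟨rFun d, rInv d, rInv_rFun d, rFun_rInv d⟩

/-- The Fabrykowski–Gupta group `Γ_d`, as the subgroup of the permutation group of the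
free monoid `{0,…,d-1}^*` generated by the tree automorphisms `a` and `r`. -/
def Gamma : Subgroup (Equiv.Perm (List (Fin d))) :=
  Subgroup.closure {aPerm d, rPerm d}

/-- The generator `a` as an element of `Γ_d`. -/
def aG : ↥(Gamma d) :=
  ⟨aPerm d, Subgroup.subset_closure (Set.mem_insert _ _)⟩

/-- The generator `r` as an element of `Γ_d`. -/
def rG : ↥(Gamma d) :=
  ⟨rPerm d, Subgroup.subset_closure (Set.mem_insert_iff.mpr (Or.inr rfl))⟩

/-- The `n`-th level stabilizer `Stab_{Γ_d}(n)`: all elements of `Γ_d` fixing every word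
of length `n`. -/
def Stab (n : ℕ) : Subgroup ↥(Gamma d) where
  carrier := { g | ∀ w : List (Fin d), w.length = n → (g : Equiv.Perm (List (Fin d))) w = w }
  one_mem' := by intro w _; rfl
  mul_mem' := by
    intro g h hg hh w hw
    have : ((g * h : ↥(Gamma d)) : Equiv.Perm (List (Fin d))) w
        = (g : Equiv.Perm (List (Fin d))) ((h : Equiv.Perm (List (Fin d))) w) := rfl
    rw [this, hh w hw, hg w hw]
  inv_mem' := by
    intro g hg w hw
    have h1 := hg w hw
    calc ((g⁻¹ : ↥(Gamma d)) : Equiv.Perm (List (Fin d))) w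
        = (g : Equiv.Perm (List (Fin d)))⁻¹ ((g : Equiv.Perm (List (Fin d))) w) := by
          rw [h1]; rfl
      _ = w := by simp

/-- The conjugate `g_i = r^{a^i} = a^{-i} r a^i` in `Γ_d`. -/
def gG (i : ℕ) : ↥(Gamma d) := (aG d ^ i)⁻¹ * rG d * aG d ^ i

end FG

namespace FG

/-- Cyclic coordinate shift on `(ℤ_d)^d` by `z`. -/
def cycAut (d : ℕ) [NeZero d] (z : ZMod d) :
    (ZMod d → Multiplicative (ZMod d)) ≃* (ZMod d → Multiplicative (ZMod d)) where
  toFun f i := f (i + z)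
  invFun f i := f (i - z)
  left_inv f := by funext i; simp
  right_inv f := by funext i; simp
  map_mul' f g := rfl

/-- The action of `ℤ_d` on `(ℤ_d)^d` by cyclically permuting the coordinates. -/
def cyc (d : ℕ) [NeZero d] :
    Multiplicative (ZMod d) →* MulAut (ZMod d → Multiplicative (ZMod d)) where
  toFun z := cycAut d (Multiplicative.toAdd z)
  map_one' := by
    refine MulEquiv.ext fun f => funext fun i => ?_
    simp [cycAut]
  map_mul' z w := by
    refine MulEquiv.ext fun f => funext fun i => ?_
    simp [cycAut, MulAut.mul_apply, add_assoc]

/-- The wreath product `ℤ_d ≀ ℤ_d = (ℤ_d)^d ⋊ ℤ_d`, with `ℤ_d` acting by cyclically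
permuting the coordinates. -/
abbrev Wreath (d : ℕ) [NeZero d] :=
  (ZMod d → Multiplicative (ZMod d)) ⋊[cyc d] Multiplicative (ZMod d)

end FG


namespace FG

open Multiplicative

variable (d : ℕ) [NeZero d]

/-! ### Length preservation -/

/-- The subgroup of length-preserving permutations of the free monoid. -/
def lenPres : Subgroup (Equiv.Perm (List (Fin d))) where
  carrier := { g | ∀ w, (g w).length = w.length }
  one_mem' := fun _ => rfl
  mul_mem' := by
    intro g h hg hh w
    have : (g * h) w = g (h w) := rfl
    rw [this, hg, hh]
  inv_mem' := by
    intro g hg w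
    have := hg (g⁻¹ w)
    rw [show g (g⁻¹ w) = w from g.apply_symm_apply w] at this
    exact this.symm

lemma aPerm_mem_lenPres : aPerm d ∈ lenPres d := by
  intro w; cases w <;> simp [aPerm, aFun]

lemma aFun_length (w : List (Fin d)) : (aFun d w).length = w.length := by
  cases w <;> simp [aFun]

lemma rPerm_mem_lenPres : rPerm d ∈ lenPres d := by
  intro w
  show (rFun d w).length = w.length
  induction w with
  | nil => simp [rFun]
  | cons x w ih =>
    by_cases h0 : x = 0
    · simp [rFun, h0, aFun_length]
    · by_cases h1 : x = -1
      · subst h1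
        have hd : ¬ d = 1 := by simpa using h0
        simp [rFun, hd, ih]
      · simp [rFun, h0, h1]

lemma gamma_le_lenPres : Gamma d ≤ lenPres d :=
  (Subgroup.closure_le _).mpr (by
    rintro g hg
    rcases hg with rfl | rfl
    · exact aPerm_mem_lenPres d
    · exact rPerm_mem_lenPres d)

lemma len_eq (g : ↥(Gamma d)) (w : List (Fin d)) :
    ((g : Equiv.Perm (List (Fin d))) w).length = w.length :=
  gamma_le_lenPres d g.2 w

/-! ### The equivalence `ZMod d ≃ Fin d` and encoding of pairs -/

/-- The natural bijection `ZMod d ≃ Fin d`. -/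
def zf : ZMod d ≃ Fin d where
  toFun x := ⟨x.val, ZMod.val_lt x⟩
  invFun y := (y.val : ZMod d)
  left_inv x := by simp [ZMod.natCast_val, ZMod.cast_id]
  right_inv y := by
    apply Fin.ext
    simp [ZMod.val_cast_of_lt y.isLt]

lemma zf_add_one (x : ZMod d) : zf d (x + 1) = zf d x + 1 := by
  apply Fin.ext
  show (x + 1).val = ((zf d x) + 1).val
  rw [ZMod.val_add, Fin.add_def, ZMod.val_one_eq_one_mod]
  simp [zf, Fin.val_one']

lemma zf_zero : zf d 0 = 0 := by
  apply Fin.ext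
  simp [zf]

lemma zf_eq_zero_iff (x : ZMod d) : zf d x = 0 ↔ x = 0 := by
  constructor
  · intro h
    have := congrArg (zf d).symm h
    rwa [Equiv.symm_apply_apply, ← zf_zero d, Equiv.symm_apply_apply] at this
  · rintro rfl; exact zf_zero d

/-- Encode a pair as a length-2 word. -/
def enc (p : ZMod d × ZMod d) : List (Fin d) := [zf d p.1, zf d p.2]

/-- Decode a length-2 word as a pair. -/
def dec : List (Fin d) → ZMod d × ZMod d
  | [x, y] => ((zf d).symm x, (zf d).symm y)
  | _ => (0, 0)

lemma dec_enc (p : ZMod d × ZMod d) : dec d (enc d p) = p := by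
  simp [enc, dec]

lemma enc_dec (l : List (Fin d)) (h : l.length = 2) : enc d (dec d l) = l := by
  match l, h with
  | [x, y], _ => simp [enc, dec]

lemma enc_length (p : ZMod d × ZMod d) : (enc d p).length = 2 := rfl

/-! ### The level-2 action `ψ : Γ_d →* Perm (ZMod d × ZMod d)` -/

/-- The underlying function of the level-2 action. -/
def piFun (g : ↥(Gamma d)) (p : ZMod d × ZMod d) : ZMod d × ZMod d :=
  dec d ((g : Equiv.Perm (List (Fin d))) (enc d p))

lemma enc_piFun (g : ↥(Gamma d)) (p : ZMod d × ZMod d) :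
    enc d (piFun d g p) = (g : Equiv.Perm (List (Fin d))) (enc d p) := by
  apply enc_dec
  rw [len_eq]
  rfl

lemma piFun_mul (g h : ↥(Gamma d)) (p : ZMod d × ZMod d) :
    piFun d (g * h) p = piFun d g (piFun d h p) := by
  have h1 : piFun d g (piFun d h p)
      = dec d ((g : Equiv.Perm (List (Fin d))) (enc d (piFun d h p))) := rfl
  rw [h1, enc_piFun]
  rfl

lemma piFun_inv (g : ↥(Gamma d)) (p : ZMod d × ZMod d) :
    piFun d g⁻¹ (piFun d g p) = p := by
  have h1 : piFun d g⁻¹ (piFun d g p)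
      = dec d (((g⁻¹ : ↥(Gamma d)) : Equiv.Perm (List (Fin d))) (enc d (piFun d g p))) := rfl
  rw [h1, enc_piFun]
  show dec d (((g : Equiv.Perm (List (Fin d))))⁻¹ ((g : Equiv.Perm (List (Fin d))) (enc d p))) = p
  rw [show ((g : Equiv.Perm (List (Fin d))))⁻¹ ((g : Equiv.Perm (List (Fin d))) (enc d p)) = enc d p
    from Equiv.symm_apply_apply _ _, dec_enc]

/-- The level-2 action as a homomorphism. -/
def psi : ↥(Gamma d) →* Equiv.Perm (ZMod d × ZMod d) :=
  MonoidHom.mk'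
    (fun g =>
      { toFun := piFun d g
        invFun := piFun d g⁻¹
        left_inv := piFun_inv d g
        right_inv := fun p => by
          have := piFun_inv d g⁻¹ p
          rwa [inv_inv] at this })
    (fun g h => Equiv.ext fun p => piFun_mul d g h p)

lemma psi_apply (g : ↥(Gamma d)) (p : ZMod d × ZMod d) :
    psi d g p = piFun d g p := rfl

/-! ### The faithful action `W : Wreath d →* Perm (ZMod d × ZMod d)` -/

/-- The natural faithful action of the wreath product on `ZMod d × ZMod d`. -/
def WFun (w : Wreath d) : Equiv.Perm (ZMod d × ZMod d) where
  toFun p := (p.1 - toAdd w.right, p.2 + toAdd (w.left (p.1 - toAdd w.right)))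
  invFun p := (p.1 + toAdd w.right, p.2 - toAdd (w.left p.1))
  left_inv p := by simp
  right_inv p := by simp

def W : Wreath d →* Equiv.Perm (ZMod d × ZMod d) :=
  MonoidHom.mk' (WFun d) (by
    intro w₁ w₂
    apply Equiv.ext
    intro p
    show ((WFun d (w₁ * w₂)) p) = WFun d w₁ ((WFun d w₂) p)
    simp only [WFun, Equiv.coe_fn_mk, SemidirectProduct.mul_left,
      SemidirectProduct.mul_right, toAdd_mul, Pi.mul_apply, cyc, cycAut,
      MonoidHom.coe_mk, OneHom.coe_mk, MulEquiv.coe_mk, Equiv.coe_fn_mk]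
    have e1 : p.1 - (toAdd w₁.right + toAdd w₂.right) + toAdd w₁.right
        = p.1 - toAdd w₂.right := by ring
    have e2 : p.1 - toAdd w₂.right - toAdd w₁.right
        = p.1 - (toAdd w₁.right + toAdd w₂.right) := by ring
    apply Prod.ext
    · show p.1 - (toAdd w₁.right + toAdd w₂.right) = p.1 - toAdd w₂.right - toAdd w₁.right
      ring
    · show p.2 + toAdd (w₁.left (p.1 - (toAdd w₁.right + toAdd w₂.right)) *
          w₂.left (p.1 - (toAdd w₁.right + toAdd w₂.right) + toAdd w₁.right))
        = p.2 + toAdd (w₂.left (p.1 - toAdd w₂.right))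
          + toAdd (w₁.left (p.1 - toAdd w₂.right - toAdd w₁.right))
      rw [toAdd_mul, e1, e2]
      ring)

lemma W_apply (w : Wreath d) (p : ZMod d × ZMod d) :
    W d w p = (p.1 - toAdd w.right, p.2 + toAdd (w.left (p.1 - toAdd w.right))) := rfl

lemma W_injective : Function.Injective (W d) := by
  intro w₁ w₂ h
  have key : ∀ p, W d w₁ p = W d w₂ p := fun p => by rw [h]
  have h1 : ∀ x : ZMod d, x - toAdd w₁.right = x - toAdd w₂.right :=
    fun x => congrArg Prod.fst (key (x, 0))
  have hr : w₁.right = w₂.right := by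
    have h' := h1 0
    have h'' : toAdd w₁.right = toAdd w₂.right := by
      have := h'
      rw [zero_sub, zero_sub, neg_inj] at this
      exact this
    exact toAdd.injective h''
  have hl : w₁.left = w₂.left := by
    funext i
    have h2 := congrArg Prod.snd (key (i + toAdd w₁.right, 0))
    simp only [W_apply, add_sub_cancel_right, hr] at h2
    have : toAdd (w₁.left i) = toAdd (w₂.left i) := by simpa using h2
    exact toAdd.injective this
  exact SemidirectProduct.ext hl hr

/-! ### Images of the generators -/

/-- The image of `a` under the level-2 action, as a wreath product element. -/
def sElt : Wreath d := ⟨1, ofAdd (-1)⟩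

/-- The pulse function supported at `0`. -/
def deltaFun : ZMod d → Multiplicative (ZMod d) :=
  fun x => if x = 0 then ofAdd 1 else 1

/-- The image of `r` under the level-2 action, as a wreath product element. -/
def rhoElt : Wreath d := ⟨deltaFun d, 1⟩

lemma psi_aG : psi d (aG d) = W d (sElt d) := by
  apply Equiv.ext
  intro p
  rw [psi_apply, W_apply]
  show dec d (aPerm d (enc d p)) = _
  have : aPerm d (enc d p) = aFun d (enc d p) := rfl
  rw [this]
  show dec d [zf d p.1 + 1, zf d p.2] = _
  rw [← zf_add_one]
  simp [dec, sElt, enc]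

lemma rFun_singleton (y : Fin d) : rFun d [y] = [y] := by
  by_cases h0 : y = 0
  · simp [rFun, h0, aFun]
  · by_cases h1 : y = -1
    · subst h1
      have hd : ¬ d = 1 := by simpa using h0
      simp [rFun, hd]
    · simp [rFun, h0, h1]

lemma psi_rG : psi d (rG d) = W d (rhoElt d) := by
  apply Equiv.ext
  intro p
  rw [psi_apply, W_apply]
  show dec d (rPerm d (enc d p)) = _
  have hr : rPerm d (enc d p) = rFun d (enc d p) := rfl
  rw [hr]
  show dec d (rFun d (zf d p.1 :: [zf d p.2])) = _
  by_cases h0 : zf d p.1 = 0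
  · have hp1 : p.1 = 0 := (zf_eq_zero_iff d _).mp h0
    rw [show rFun d (zf d p.1 :: [zf d p.2]) = zf d p.1 :: aFun d [zf d p.2] by
      simp [rFun, h0]]
    show dec d [zf d p.1, zf d p.2 + 1] = _
    rw [← zf_add_one]
    simp [dec, rhoElt, deltaFun, hp1]
  · have hp1 : p.1 ≠ 0 := fun h => h0 (by rw [h]; exact zf_zero d)
    have hd : ¬ d = 1 := by
      intro h
      subst h
      exact h0 (Subsingleton.elim _ _)
    by_cases h1 : zf d p.1 = -1
    · rw [show rFun d (zf d p.1 :: [zf d p.2]) = zf d p.1 :: rFun d [zf d p.2] by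
        simp [rFun, h0, h1, hd]]
      rw [rFun_singleton]
      simp [dec, rhoElt, deltaFun, hp1]
    · rw [show rFun d (zf d p.1 :: [zf d p.2]) = zf d p.1 :: [zf d p.2] by
        simp [rFun, h0, h1]]
      simp [dec, rhoElt, deltaFun, hp1]

/-! ### `sElt` and `rhoElt` generate the wreath product -/

lemma inr_ofAdd_mem (z : ZMod d) :
    (SemidirectProduct.inr (ofAdd z) : Wreath d) ∈ Subgroup.closure {sElt d, rhoElt d} := by
  have hs : sElt d = SemidirectProduct.inr (ofAdd (-1)) := by
    apply SemidirectProduct.ext <;> simp [sElt]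
  have hmem : (SemidirectProduct.inr (ofAdd (-1)) : Wreath d)
      ∈ Subgroup.closure {sElt d, rhoElt d} := by
    rw [← hs]; exact Subgroup.subset_closure (Set.mem_insert _ _)
  have hpow : (SemidirectProduct.inr (ofAdd (-1)) : Wreath d) ^ (-z).val
      = SemidirectProduct.inr (ofAdd z) := by
    rw [← map_pow]
    congr 1
    rw [← ofAdd_nsmul]
    congr 1
    rw [nsmul_eq_mul, mul_neg_one]
    rw [ZMod.natCast_val, ZMod.cast_id, neg_neg]
  rw [← hpow]
  exact pow_mem hmem _

/-- The pulse function at `i` with value `c`. -/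
def pulse (i : ZMod d) (c : Multiplicative (ZMod d)) : ZMod d → Multiplicative (ZMod d) :=
  fun j => if j = i then c else 1

lemma pulse_pow (i : ZMod d) (c : Multiplicative (ZMod d)) (n : ℕ) :
    pulse d i c ^ n = pulse d i (c ^ n) := by
  funext j
  rw [Pi.pow_apply]
  unfold pulse
  by_cases h : j = i <;> simp [h]

lemma inl_pulse_one_mem (i : ZMod d) :
    (SemidirectProduct.inl (pulse d i (ofAdd 1)) : Wreath d)
      ∈ Subgroup.closure {sElt d, rhoElt d} := by
  have hrho : rhoElt d = SemidirectProduct.inl (deltaFun d) := by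
    apply SemidirectProduct.ext <;> simp [rhoElt]
  have haut : (cyc d) (ofAdd (-i)) (deltaFun d) = pulse d i (ofAdd 1) := by
    funext j
    show deltaFun d (j + toAdd (ofAdd (-i))) = pulse d i (ofAdd 1) j
    unfold deltaFun pulse
    have : j + toAdd (ofAdd (-i)) = 0 ↔ j = i := by
      rw [toAdd_ofAdd]
      constructor
      · intro h; linear_combination h
      · intro h; rw [h]; ring
    by_cases h : j = i
    · rw [if_pos (this.mpr h), if_pos h]
    · rw [if_neg (fun hh => h (this.mp hh)), if_neg h]
  rw [← haut, SemidirectProduct.inl_aut]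
  refine Subgroup.mul_mem _ (Subgroup.mul_mem _ ?_ ?_) ?_
  · exact inr_ofAdd_mem d _
  · rw [← hrho]; exact Subgroup.subset_closure (Set.mem_insert_iff.mpr (Or.inr rfl))
  · have : ((ofAdd (-i) : Multiplicative (ZMod d)))⁻¹ = ofAdd i := by
      rw [← ofAdd_neg, neg_neg]
    rw [this]
    exact inr_ofAdd_mem d i

lemma inl_pulse_mem (i : ZMod d) (c : Multiplicative (ZMod d)) :
    (SemidirectProduct.inl (pulse d i c) : Wreath d)
      ∈ Subgroup.closure {sElt d, rhoElt d} := by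
  have hc : c = ofAdd 1 ^ (toAdd c).val := by
    rw [← ofAdd_nsmul, nsmul_eq_mul, mul_one, ZMod.natCast_val, ZMod.cast_id, ofAdd_toAdd]
  rw [hc, ← pulse_pow, map_pow]
  exact pow_mem (inl_pulse_one_mem d i) _

lemma inl_mem (f : ZMod d → Multiplicative (ZMod d)) :
    (SemidirectProduct.inl f : Wreath d) ∈ Subgroup.closure {sElt d, rhoElt d} := by
  have key : ∀ s : Finset (ZMod d),
      (SemidirectProduct.inl (∏ i ∈ s, pulse d i (f i)) : Wreath d)
        ∈ Subgroup.closure {sElt d, rhoElt d} := by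
    intro s
    induction s using Finset.induction_on with
    | empty => simp only [Finset.prod_empty, map_one]; exact Subgroup.one_mem _
    | insert _ _ hnot ih =>
      rw [Finset.prod_insert hnot, map_mul]
      exact Subgroup.mul_mem _ (inl_pulse_mem d _ _) ih
  have hf : f = ∏ i : ZMod d, pulse d i (f i) := by
    funext j
    rw [Finset.prod_apply]
    unfold pulse
    rw [Finset.prod_ite_eq Finset.univ j f]
    simp
  rw [hf]
  exact key Finset.univ

lemma closure_s_rho_eq_top :
    Subgroup.closure {sElt d, rhoElt d} = (⊤ : Subgroup (Wreath d)) := by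
  rw [eq_top_iff]
  intro w _
  have hw : w = SemidirectProduct.inl w.left * SemidirectProduct.inr w.right := by
    apply SemidirectProduct.ext <;> simp
  rw [hw]
  refine Subgroup.mul_mem _ (inl_mem d _) ?_
  have : w.right = ofAdd (toAdd w.right) := rfl
  rw [this]
  exact inr_ofAdd_mem d _

/-! ### Range equality -/

lemma psi_range_eq : (psi d).range = (W d).range := by
  have htop : (⊤ : Subgroup ↥(Gamma d))
      = Subgroup.closure ((Subtype.val : ↥(Gamma d) → _) ⁻¹' {aPerm d, rPerm d}) :=
    (Subgroup.closure_closure_coe_preimage).symm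
  have himg : (psi d) '' ((Subtype.val : ↥(Gamma d) → _) ⁻¹' {aPerm d, rPerm d})
      = {W d (sElt d), W d (rhoElt d)} := by
    apply Set.eq_of_subset_of_subset
    · rintro x ⟨g, hg, rfl⟩
      rcases hg with hg | hg
      · have : g = aG d := Subtype.ext hg
        rw [this, psi_aG]
        exact Set.mem_insert _ _
      · have : g = rG d := Subtype.ext hg
        rw [this, psi_rG]
        exact Set.mem_insert_iff.mpr (Or.inr rfl)
    · rintro x hx
      rcases hx with rfl | rfl
      · exact ⟨aG d, Set.mem_insert _ _, psi_aG d⟩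
      · exact ⟨rG d, Set.mem_insert_iff.mpr (Or.inr rfl), psi_rG d⟩
  have h1 : (psi d).range = Subgroup.map (psi d) ⊤ := (MonoidHom.range_eq_map _)
  rw [h1, htop, MonoidHom.map_closure, himg]
  have h2 : ({W d (sElt d), W d (rhoElt d)} : Set _) = (W d) '' {sElt d, rhoElt d} := by
    rw [Set.image_insert_eq, Set.image_singleton]
  rw [h2, ← MonoidHom.map_closure, closure_s_rho_eq_top]
  rw [← MonoidHom.range_eq_map]

/-! ### Kernel -/

lemma psi_ker_eq : (psi d).ker = Stab d 2 := by
  ext g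
  constructor
  · intro hg w hw
    have hfix : ∀ p, piFun d g p = p := by
      intro p
      have : psi d g = 1 := hg
      have := congrArg (fun e => (e : Equiv.Perm (ZMod d × ZMod d)) p) this
      simpa [psi_apply] using this
    have hw2 : w = enc d (dec d w) := (enc_dec d w hw).symm
    rw [hw2, ← enc_piFun, hfix]
  · intro hg
    show psi d g = 1
    apply Equiv.ext
    intro p
    rw [psi_apply]
    show piFun d g p = p
    unfold piFun
    rw [hg (enc d p) (enc_length d p), dec_enc]

end FG

/-- For every `d ≥ 5`, `Γ_d / Stab(2)` is isomorphic to the wreath product `ℤ_d ≀ ℤ_d`,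
i.e. there is a surjective homomorphism `Γ_d → (ℤ_d)^d ⋊ ℤ_d` with kernel `Stab(2)`. -/
theorem stmt_6 (d : ℕ) [NeZero d] (hd : 5 ≤ d) :
    ∃ φ : ↥(FG.Gamma d) →* FG.Wreath d,
      Function.Surjective φ ∧ φ.ker = FG.Stab d 2 := by
  classical
  have hinj := FG.W_injective d
  have hrange := FG.psi_range_eq d
  have hmem : ∀ g, FG.psi d g ∈ (FG.W d).range := by
    intro g
    rw [← hrange]
    exact ⟨g, rfl⟩
  let e : FG.Wreath d ≃* ↥(FG.W d).range := MonoidHom.ofInjective hinj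
  let ψ' : ↥(FG.Gamma d) →* ↥(FG.W d).range := (FG.psi d).codRestrict _ hmem
  refine ⟨e.symm.toMonoidHom.comp ψ', ?_, ?_⟩
  · intro w
    have : (e w : Equiv.Perm (ZMod d × ZMod d)) ∈ (FG.psi d).range := by
      rw [hrange]
      exact (e w).2
    obtain ⟨g, hg⟩ := this
    refine ⟨g, ?_⟩
    have h1 : ψ' g = e w := Subtype.ext hg
    show e.symm (ψ' g) = w
    rw [h1, MulEquiv.symm_apply_apply]
  · rw [← FG.psi_ker_eq d]
    ext g
    constructor
    · intro hg
      have h1 : e.symm (ψ' g) = 1 := hg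
      have h2 : ψ' g = 1 := by
        have := congrArg e h1
        rwa [MulEquiv.apply_symm_apply, map_one] at this
      show FG.psi d g = 1
      exact congrArg Subtype.val h2
    · intro hg
      have h2 : ψ' g = 1 := Subtype.ext (hg : FG.psi d g = 1)
      show e.symm (ψ' g) = 1
      rw [h2, map_one]
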